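/- arXiv:1409.5865 — 2 statements merged into one kernel-verified Lean document; each statement's English description precedes it below -/
import Mathlib

section
/- Every pointed precubical morphism f : T → Y from a higher-dimensional tree T to an HDA Y factors uniquely through the projection: there exists a unique pointed precubical morphism g : T → Ỹ with f = π_Y∘g. Consequently, the unfolding functor U : HDA → HDT (sending X to X̃ and f : X → Y to f̃ : X̃ → Ỹ, f̃[x_1,…,x_m] = [f(x_1),…,f(x_m)]) is right adjoint to the inclusion HDT ↪ HDA, with counit the projections π_X. -/
set_option autoImplicit false

/-- A precubical set: a graded set with face maps `δ_k^ν` (ν encoded as `Bool`,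
`false` = lower face `δ^0`, `true` = upper face `δ^1`; indices are 0-based)
satisfying the precubical identity. -/
structure PCSet : Type 1 where
  cube : ℕ → Type
  face : ∀ {n : ℕ}, Bool → Fin (n + 1) → cube (n + 1) → cube n
  precub : ∀ {n : ℕ} (ν μ : Bool) (k l : ℕ) (hk : k < n + 1) (hl : l < n + 2)
      (_ : k < l) (x : cube (n + 2)),
      face ν ⟨k, hk⟩ (face μ ⟨l, hl⟩ x) =
        face μ ⟨l - 1, by omega⟩ (face ν ⟨k, by omega⟩ x)

namespace PCSet

/-- A cube of arbitrary dimension. -/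
abbrev Cell (X : PCSet) : Type := Σ n : ℕ, X.cube n

/-- One step of a cube path: either `x = δ_k^0 y` or `y = δ_k^1 x`. -/
def Step (X : PCSet) (x y : X.Cell) : Prop :=
  (∃ (n : ℕ) (k : Fin (n + 1)) (c : X.cube (n + 1)),
      x = ⟨n, X.face false k c⟩ ∧ y = ⟨n + 1, c⟩) ∨
  (∃ (n : ℕ) (k : Fin (n + 1)) (c : X.cube (n + 1)),
      x = ⟨n + 1, c⟩ ∧ y = ⟨n, X.face true k c⟩)

/-- A cube path: a nonempty sequence of cubes, consecutive ones related by `Step`. -/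
def IsCubePath (X : PCSet) (l : List X.Cell) : Prop :=
  l ≠ [] ∧ l.Chain' X.Step

/-- Adjacency condition (1): `x_{p−1} = δ_k^0 x_p`, `x_p = δ_ℓ^0 x_{p+1}`,
`y_{p−1} = δ_{ℓ−1}^0 y_p`, `y_p = δ_k^0 y_{p+1}`, `k < ℓ`.
Here `a = x_{p-1} = y_{p-1}`, `b = x_p`, `b' = y_p`, `c = x_{p+1} = y_{p+1}`. -/
def Adj1 (X : PCSet) (a b b' c : X.Cell) : Prop :=
  ∃ (n k l : ℕ) (hk : k < n + 1) (hl : l < n + 2) (_ : k < l) (u : X.cube (n + 2)),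
    c = ⟨n + 2, u⟩ ∧
    b = ⟨n + 1, X.face false ⟨l, hl⟩ u⟩ ∧
    b' = ⟨n + 1, X.face false ⟨k, by omega⟩ u⟩ ∧
    a = ⟨n, X.face false ⟨k, hk⟩ (X.face false ⟨l, hl⟩ u)⟩ ∧
    a = ⟨n, X.face false ⟨l - 1, by omega⟩ (X.face false ⟨k, by omega⟩ u)⟩

/-- Adjacency condition (2): `x_p = δ_k^1 x_{p−1}`, `x_{p+1} = δ_ℓ^1 x_p`,
`y_p = δ_{ℓ−1}^1 y_{p−1}`, `y_{p+1} = δ_k^1 y_p`, `k < ℓ`. -/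
def Adj2 (X : PCSet) (a b b' c : X.Cell) : Prop :=
  ∃ (n k l : ℕ) (hk : k < n + 2) (hl : l < n + 1) (_ : k < l) (u : X.cube (n + 2)),
    a = ⟨n + 2, u⟩ ∧
    b = ⟨n + 1, X.face true ⟨k, hk⟩ u⟩ ∧
    b' = ⟨n + 1, X.face true ⟨l - 1, by omega⟩ u⟩ ∧
    c = ⟨n, X.face true ⟨l, hl⟩ (X.face true ⟨k, hk⟩ u)⟩ ∧
    c = ⟨n, X.face true ⟨k, by omega⟩ (X.face true ⟨l - 1, by omega⟩ u)⟩

/-- Adjacency condition (3): `x_p = δ_k^0 δ_ℓ^1 y_p`, `y_{p−1} = δ_k^0 y_p`,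
`y_{p+1} = δ_ℓ^1 y_p`, `k < ℓ`. -/
def Adj3 (X : PCSet) (a b b' c : X.Cell) : Prop :=
  ∃ (n k l : ℕ) (hk : k < n + 1) (hl : l < n + 2) (_ : k < l) (u : X.cube (n + 2)),
    b' = ⟨n + 2, u⟩ ∧
    b = ⟨n, X.face false ⟨k, hk⟩ (X.face true ⟨l, hl⟩ u)⟩ ∧
    a = ⟨n + 1, X.face false ⟨k, by omega⟩ u⟩ ∧
    c = ⟨n + 1, X.face true ⟨l, hl⟩ u⟩

/-- Adjacency condition (4): `x_p = δ_k^1 δ_ℓ^0 y_p`, `y_{p−1} = δ_ℓ^0 y_p`,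
`y_{p+1} = δ_k^1 y_p`, `k < ℓ`. -/
def Adj4 (X : PCSet) (a b b' c : X.Cell) : Prop :=
  ∃ (n k l : ℕ) (hk : k < n + 1) (hl : l < n + 2) (_ : k < l) (u : X.cube (n + 2)),
    b' = ⟨n + 2, u⟩ ∧
    b = ⟨n, X.face true ⟨k, hk⟩ (X.face false ⟨l, hl⟩ u)⟩ ∧
    a = ⟨n + 1, X.face false ⟨l, hl⟩ u⟩ ∧
    c = ⟨n + 1, X.face true ⟨k, by omega⟩ u⟩

/-- One of the four adjacency conditions holds, possibly with the roles of the
two paths exchanged. -/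
def AdjMid (X : PCSet) (a b b' c : X.Cell) : Prop :=
  Adj1 X a b b' c ∨ Adj2 X a b b' c ∨ Adj3 X a b b' c ∨ Adj4 X a b b' c ∨
  Adj1 X a b' b c ∨ Adj2 X a b' b c ∨ Adj3 X a b' b c ∨ Adj4 X a b' b c

/-- Two cube paths are adjacent: they agree everywhere except at exactly one
(interior) index `p`, where one of the four exchange conditions holds. -/
def Adjacent (X : PCSet) (l₁ l₂ : List X.Cell) : Prop :=
  X.IsCubePath l₁ ∧ X.IsCubePath l₂ ∧ l₁.length = l₂.length ∧
  ∃ p : ℕ, 0 < p ∧ p + 1 < l₁.length ∧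
    (∀ q : ℕ, q ≠ p → l₁[q]? = l₂[q]?) ∧
    l₁[p]? ≠ l₂[p]? ∧
    ∃ a b b' c : X.Cell,
      l₁[p - 1]? = some a ∧ l₁[p]? = some b ∧ l₂[p]? = some b' ∧
      l₁[p + 1]? = some c ∧ X.AdjMid a b b' c

/-- Homotopy of cube paths: the reflexive-transitive closure of adjacency. -/
def Homotopic (X : PCSet) : List X.Cell → List X.Cell → Prop :=
  Relation.ReflTransGen X.Adjacent

/-- Iterated application of face maps, parameters in application order. -/
inductive IterFace (X : PCSet) : X.Cell → List (ℕ × Bool) → X.Cell → Prop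
  | nil (c : X.Cell) : IterFace X c [] c
  | cons {n : ℕ} (ν : Bool) (k : Fin (n + 1)) (c : X.cube (n + 1)) {l : List (ℕ × Bool)}
      {res : X.Cell} :
      IterFace X ⟨n, X.face ν k c⟩ l res →
      IterFace X ⟨n + 1, c⟩ ((k.1, ν) :: l) res

/-- `p` is obtained from `c` as `δ_{k_1}^{ν_1}⋯δ_{k_q}^{ν_q} c` where
`k_1 < ⋯ < k_q` (in application order, the index list `ks` is strictly
decreasing). -/
def RepGen (X : PCSet) (c p : X.Cell) (ks : List ℕ) : Prop :=
  List.Pairwise (· > ·) ks ∧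
  ∃ νs : List Bool, νs.length = ks.length ∧ IterFace X c (ks.zip νs) p

/-- `l` is a representing sequence for a precubical path object. -/
def IsRep (X : PCSet) (l : List X.Cell) : Prop :=
  l ≠ [] ∧ l.Nodup ∧ l.Chain' X.Step ∧
  ∀ p : X.Cell, ∃ c ∈ l, (∃ ks, RepGen X c p ks) ∧
    ∀ ks₁ ks₂ : List ℕ, RepGen X c p ks₁ → RepGen X c p ks₂ → ks₁ = ks₂

/-- Morphisms of precubical sets. -/
structure Hom (X Y : PCSet) where
  map : ∀ n : ℕ, X.cube n → Y.cube n
  comm : ∀ (n : ℕ) (ν : Bool) (k : Fin (n + 1)) (x : X.cube (n + 1)),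
    map n (X.face ν k x) = Y.face ν k (map (n + 1) x)

def Hom.id (X : PCSet) : Hom X X where
  map _ x := x
  comm _ _ _ _ := rfl

def Hom.comp {X Y Z : PCSet} (g : Hom Y Z) (f : Hom X Y) : Hom X Z where
  map n x := g.map n (f.map n x)
  comm n ν k x := by (try dsimp only); rw [f.comm, g.comm]

def Hom.cell {X Y : PCSet} (f : Hom X Y) (x : X.Cell) : Y.Cell := ⟨x.1, f.map x.1 x.2⟩

/-- `R` is a precubical subset of the product `X × Y`. -/
def PrecubRel (X Y : PCSet) (R : Set (X.Cell × Y.Cell)) : Prop :=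
  (∀ p ∈ R, p.1.1 = p.2.1) ∧
  ∀ (n : ℕ) (x : X.cube (n + 1)) (y : Y.cube (n + 1)),
    ((⟨n + 1, x⟩, ⟨n + 1, y⟩) : X.Cell × Y.Cell) ∈ R →
    ∀ (ν : Bool) (k : Fin (n + 1)),
      ((⟨n, X.face ν k x⟩, ⟨n, Y.face ν k y⟩) : X.Cell × Y.Cell) ∈ R

/-- One-step bisimulation via a precubical relation (condition (2) of Thm 3.4). -/
def OneStepBisim (X Y : PCSet) (bx : X.Cell) (by' : Y.Cell) : Prop :=
  ∃ R : Set (X.Cell × Y.Cell), PrecubRel X Y R ∧ (bx, by') ∈ R ∧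
    ∀ (n : ℕ) (x₁ : X.cube n) (y₁ : Y.cube n),
      ((⟨n, x₁⟩, ⟨n, y₁⟩) : X.Cell × Y.Cell) ∈ R →
      (∀ (x₂ : X.cube (n + 1)) (k : Fin (n + 1)), x₁ = X.face false k x₂ →
        ∃ y₂ : Y.cube (n + 1), y₁ = Y.face false k y₂ ∧
          ((⟨n + 1, x₂⟩, ⟨n + 1, y₂⟩) : X.Cell × Y.Cell) ∈ R) ∧
      (∀ (y₂ : Y.cube (n + 1)) (k : Fin (n + 1)), y₁ = Y.face false k y₂ →
        ∃ x₂ : X.cube (n + 1), x₁ = X.face false k x₂ ∧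
          ((⟨n + 1, x₂⟩, ⟨n + 1, y₂⟩) : X.Cell × Y.Cell) ∈ R)

/-- Cube-path matching bisimulation (condition (3) of Thm 3.4). -/
def PathBisim (X Y : PCSet) (bx : X.Cell) (by' : Y.Cell) : Prop :=
  ∃ R : Set (X.Cell × Y.Cell), PrecubRel X Y R ∧ (bx, by') ∈ R ∧
    ∀ (x₁ : X.Cell) (y₁ : Y.Cell), (x₁, y₁) ∈ R →
      (∀ lx : List X.Cell, X.IsCubePath lx → lx.head? = some x₁ →
        ∃ ly : List Y.Cell, Y.IsCubePath ly ∧ ly.head? = some y₁ ∧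
          ly.length = lx.length ∧ ∀ pr ∈ lx.zip ly, pr ∈ R) ∧
      (∀ ly : List Y.Cell, Y.IsCubePath ly → ly.head? = some y₁ →
        ∃ lx : List X.Cell, X.IsCubePath lx ∧ lx.head? = some x₁ ∧
          lx.length = ly.length ∧ ∀ pr ∈ lx.zip ly, pr ∈ R)

/-- A fan-shaped cube path: one-dimensional (alternating dimensions 0 and 1)
until it has to build up to its end cube of dimension `n`. -/
def IsFan (X : PCSet) (l : List X.Cell) : Prop :=
  ∃ (n : ℕ) (c : X.cube n), l.getLast? = some ⟨n, c⟩ ∧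
    ∀ (i : ℕ) (hi : i < l.length),
      (i + n + 1 ≤ l.length → (l.get ⟨i, hi⟩).1 = if i % 2 = 0 then 0 else 1) ∧
      (l.length < i + n + 1 → (l.get ⟨i, hi⟩).1 = n + i + 1 - l.length)

/-- The cube path `(x_1, …, x_n, x)` obtained by repeatedly taking lower faces
`x_j = δ_{k_j}^0 ⋯ δ_{k_n}^0 x`, one for each choice of indices `k_j ≤ j`. -/
def lowerChain (X : PCSet) : ∀ (n : ℕ), X.cube n → (∀ j : Fin n, Fin (j.1 + 1)) → List X.Cell
  | 0, x, _ => [⟨0, x⟩]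
  | n + 1, x, ks =>
      lowerChain X n (X.face false (ks ⟨n, Nat.lt_succ_self n⟩) x)
        (fun j => ks ⟨j.1, by omega⟩) ++ [⟨n + 1, x⟩]

end PCSet

open PCSet

/-- A higher-dimensional automaton: a pointed precubical set. -/
structure HDA extends PCSet where
  base : cube 0

/-- Pointed morphisms of higher-dimensional automata. -/
structure HDAHom (X Y : HDA) where
  toHom : Hom X.toPCSet Y.toPCSet
  pointed : toHom.map 0 X.base = Y.base

def HDAHom.id (X : HDA) : HDAHom X X := ⟨Hom.id _, rfl⟩

def HDAHom.comp {X Y Z : HDA} (g : HDAHom Y Z) (f : HDAHom X Y) : HDAHom X Z :=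
  ⟨g.toHom.comp f.toHom, by
    show g.toHom.map 0 (f.toHom.map 0 X.base) = Z.base
    rw [f.pointed, g.pointed]⟩

def HDAHom.IsIso {X Y : HDA} (f : HDAHom X Y) : Prop :=
  ∃ g : HDAHom Y X, g.comp f = HDAHom.id X ∧ f.comp g = HDAHom.id Y

/-- A pointed cube path: a cube path starting in the base point. -/
def HDA.IsPointedPath (X : HDA) (l : List X.toPCSet.Cell) : Prop :=
  X.toPCSet.IsCubePath l ∧ l.head? = some ⟨0, X.base⟩

/-- A cube is reachable if some pointed cube path ends in it. -/
def HDA.Reachable (X : HDA) (x : X.toPCSet.Cell) : Prop :=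
  ∃ l, X.IsPointedPath l ∧ l.getLast? = some x

/-- The type of pointed cube paths of `X` ending in an `n`-cube. -/
def HDA.PPath (X : HDA) (n : ℕ) : Type :=
  { l : List X.toPCSet.Cell //
      X.IsPointedPath l ∧ ∃ c : X.cube n, l.getLast? = some ⟨n, c⟩ }

/-- A pointed precubical path object (object of the category HDP). -/
def HDA.IsPathObj (P : HDA) : Prop :=
  ∃ l, IsRep P.toPCSet l ∧ l.head? = some ⟨0, P.base⟩

/-- A cube path extension: maps the representation of `P` to an initial segment
of the representation of `Q`. -/
def IsExtension {P Q : HDA} (f : HDAHom P Q) : Prop :=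
  ∃ (lp : List P.toPCSet.Cell) (lq : List Q.toPCSet.Cell),
    IsRep P.toPCSet lp ∧ lp.head? = some ⟨0, P.base⟩ ∧
    IsRep Q.toPCSet lq ∧ lq.head? = some ⟨0, Q.base⟩ ∧
    ∃ hle : lp.length ≤ lq.length,
      ∀ (j : ℕ) (hj : j < lp.length),
        f.toHom.cell (lp.get ⟨j, hj⟩) = lq.get ⟨j, lt_of_lt_of_le hj hle⟩

/-- Morphisms of the category HDP: generated by pointed cube path extensions
and isomorphisms between pointed precubical path objects. -/
inductive IsHDPHom : ∀ {P Q : HDA}, HDAHom P Q → Prop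
  | ext {P Q : HDA} (f : HDAHom P Q) :
      P.IsPathObj → Q.IsPathObj → IsExtension f → IsHDPHom f
  | iso {P Q : HDA} (f : HDAHom P Q) :
      P.IsPathObj → Q.IsPathObj → f.IsIso → IsHDPHom f
  | comp {P Q R : HDA} {f : HDAHom P Q} {g : HDAHom Q R} :
      IsHDPHom f → IsHDPHom g → IsHDPHom (g.comp f)

/-- Open maps of HDA: right lifting property with respect to HDP. -/
def IsOpenHom {X Y : HDA} (f : HDAHom X Y) : Prop :=
  ∀ (P Q : HDA) (g : HDAHom P Q), IsHDPHom g →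
    ∀ (p : HDAHom P X) (q : HDAHom Q Y), f.comp p = q.comp g →
      ∃ r : HDAHom Q X, r.comp g = p ∧ f.comp r = q

/-- hd-bisimilarity: a span of open maps. -/
def HdBisimilar (X Y : HDA) : Prop :=
  ∃ (Z : HDA) (f : HDAHom Z X) (g : HDAHom Z Y), IsOpenHom f ∧ IsOpenHom g

/-- A higher-dimensional tree: every cube is the end of exactly one homotopy
class of pointed cube paths. -/
def HDA.IsTree (X : HDA) : Prop :=
  ∀ x : X.toPCSet.Cell,
    (∃ l, X.IsPointedPath l ∧ l.getLast? = some x) ∧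
    ∀ l₁ l₂ : List X.toPCSet.Cell, X.IsPointedPath l₁ → l₁.getLast? = some x →
      X.IsPointedPath l₂ → l₂.getLast? = some x → X.toPCSet.Homotopic l₁ l₂

/-- An unfolding of the HDA `X`: an HDA `Xu` whose `n`-cubes are exactly the
homotopy classes (`cls`) of pointed cube paths of `X` ending in an `n`-cube,
with the face maps, base point and projection of Definition 4.3. -/
structure Unfolding (X : HDA) where
  Xu : HDA
  proj : HDAHom Xu X
  cls : ∀ n : ℕ, X.PPath n → Xu.cube n
  cls_eq : ∀ (n : ℕ) (a b : X.PPath n),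
    cls n a = cls n b ↔ X.toPCSet.Homotopic a.1 b.1
  cls_surj : ∀ (n : ℕ) (x : Xu.cube n), ∃ a, cls n a = x
  cls_base : ∀ a : X.PPath 0, a.1 = [⟨0, X.base⟩] → cls 0 a = Xu.base
  face_true : ∀ (n : ℕ) (k : Fin (n + 1)) (a : X.PPath (n + 1)) (c : X.cube (n + 1)),
    a.1.getLast? = some ⟨n + 1, c⟩ →
    ∀ b : X.PPath n, b.1 = a.1 ++ [⟨n, X.toPCSet.face true k c⟩] →
      Xu.toPCSet.face true k (cls (n + 1) a) = cls n b
  face_false : ∀ (n : ℕ) (k : Fin (n + 1)) (a : X.PPath (n + 1)) (c : X.cube (n + 1)),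
    a.1.getLast? = some ⟨n + 1, c⟩ →
    ∀ b : X.PPath n,
      (Xu.toPCSet.face false k (cls (n + 1) a) = cls n b ↔
        b.1.getLast? = some ⟨n, X.toPCSet.face false k c⟩ ∧
          X.toPCSet.Homotopic (b.1 ++ [⟨n + 1, c⟩]) a.1)
  proj_cls : ∀ (n : ℕ) (a : X.PPath n) (c : X.cube n),
    a.1.getLast? = some ⟨n, c⟩ → proj.toHom.map n (cls n a) = c

/-- The set `δ̃_k^0 [l]` of Definition 4.3: pointed cube paths `l'` with
`l'` ending in `δ_k^0 c` and `l' * (c) ∼ l`. -/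
def predSet (X : HDA) (n : ℕ) (k : Fin (n + 1)) (c : X.cube (n + 1))
    (l : List X.toPCSet.Cell) : Set (List X.toPCSet.Cell) :=
  { l' | X.IsPointedPath l' ∧ l'.getLast? = some ⟨n, X.toPCSet.face false k c⟩ ∧
      X.toPCSet.Homotopic (l' ++ [(⟨n + 1, c⟩ : X.toPCSet.Cell)]) l }

/-- Prefix order on homotopy classes (cubes of an unfolding): some
representatives are prefix-related. -/
def Unfolding.ClassLe {X : HDA} (U : Unfolding X) (c d : U.Xu.toPCSet.Cell) : Prop :=
  ∃ (a : X.PPath c.1) (b : X.PPath d.1),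
    U.cls c.1 a = c.2 ∧ U.cls d.1 b = d.2 ∧ a.1 <+: b.1

/-- `h` is the morphism of unfoldings induced by `g` (i.e. `g̃`). -/
def IsUnfoldMap {X Y : HDA} (UX : Unfolding X) (UY : Unfolding Y)
    (g : HDAHom X Y) (h : HDAHom UX.Xu UY.Xu) : Prop :=
  ∀ (n : ℕ) (a : X.PPath n), ∃ b : Y.PPath n,
    b.1 = a.1.map g.toHom.cell ∧ h.toHom.map n (UX.cls n a) = UY.cls n b

/-- Open maps in the category HDAh: right lifting property with respect to
HDPh (morphisms of unfoldings corresponding to HDP-morphisms under the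
projections). -/
def IsOpenHDAh {X Y : HDA} (UX : Unfolding X) (UY : Unfolding Y)
    (f : HDAHom UX.Xu UY.Xu) : Prop :=
  ∀ (P Q : HDA) (UP : Unfolding P) (UQ : Unfolding Q) (g : HDAHom UP.Xu UQ.Xu),
    (∃ g₀ : HDAHom P Q, IsHDPHom g₀ ∧ UQ.proj.comp g = g₀.comp UP.proj) →
    ∀ (p : HDAHom UP.Xu UX.Xu) (q : HDAHom UQ.Xu UY.Xu),
      f.comp p = q.comp g →
      ∃ r : HDAHom UQ.Xu UX.Xu, r.comp g = p ∧ f.comp r = q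

/-- Homotopy bisimilarity: a span of open maps in HDAh. -/
def HomotopyBisimilar (X Y : HDA) : Prop :=
  ∃ (Z : HDA) (UX : Unfolding X) (UY : Unfolding Y) (UZ : Unfolding Z)
    (f : HDAHom UZ.Xu UX.Xu) (g : HDAHom UZ.Xu UY.Xu),
    IsOpenHDAh UZ UX f ∧ IsOpenHDAh UZ UY g

/-- Prefix-matching bisimulation on unfoldings (condition (4) of Prop 6.5). -/
def PrefixBisim {X Y : HDA} (UX : Unfolding X) (UY : Unfolding Y) : Prop :=
  ∃ R : Set (UX.Xu.toPCSet.Cell × UY.Xu.toPCSet.Cell),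
    PrecubRel UX.Xu.toPCSet UY.Xu.toPCSet R ∧
    ((⟨0, UX.Xu.base⟩, ⟨0, UY.Xu.base⟩) : _ × _) ∈ R ∧
    ∀ (c : UX.Xu.toPCSet.Cell) (d : UY.Xu.toPCSet.Cell), (c, d) ∈ R →
      (∀ c₂, UX.ClassLe c c₂ → ∃ d₂, UY.ClassLe d d₂ ∧ (c₂, d₂) ∈ R) ∧
      (∀ d₂, UY.ClassLe d d₂ → ∃ c₂, UX.ClassLe c c₂ ∧ (c₂, d₂) ∈ R)

/-- One refinement step of the fixed-point algorithm deciding hd-bisimilarity. -/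
def refineStep (X Y : HDA) (S : Set (X.toPCSet.Cell × Y.toPCSet.Cell)) :
    Set (X.toPCSet.Cell × Y.toPCSet.Cell) :=
  { p | p ∈ S ∧ p.1.1 = p.2.1 ∧
    (∀ (n : ℕ) (x : X.cube (n + 1)) (y : Y.cube (n + 1)),
      p = (⟨n + 1, x⟩, ⟨n + 1, y⟩) →
      ∀ (ν : Bool) (k : Fin (n + 1)),
        ((⟨n, X.toPCSet.face ν k x⟩, ⟨n, Y.toPCSet.face ν k y⟩) : _ × _) ∈ S) ∧
    (∀ (n : ℕ) (x₁ : X.cube n) (y₁ : Y.cube n),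
      p = (⟨n, x₁⟩, ⟨n, y₁⟩) →
      (∀ (x₂ : X.cube (n + 1)) (k : Fin (n + 1)), x₁ = X.toPCSet.face false k x₂ →
        ∃ y₂ : Y.cube (n + 1), y₁ = Y.toPCSet.face false k y₂ ∧
          ((⟨n + 1, x₂⟩, ⟨n + 1, y₂⟩) : _ × _) ∈ S) ∧
      (∀ (y₂ : Y.cube (n + 1)) (k : Fin (n + 1)), y₁ = Y.toPCSet.face false k y₂ →
        ∃ x₂ : X.cube (n + 1), x₁ = X.toPCSet.face false k x₂ ∧
          ((⟨n + 1, x₂⟩, ⟨n + 1, y₂⟩) : _ × _) ∈ S)) }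

section AuxLemmas

namespace PCSet

variable {X Y : PCSet}

lemma map_step (f : Hom X Y) {a b : X.Cell} (h : X.Step a b) :
    Y.Step (f.cell a) (f.cell b) := by
  rcases h with ⟨n, k, c, rfl, rfl⟩ | ⟨n, k, c, rfl, rfl⟩
  · exact Or.inl ⟨n, k, f.map _ c, by simp [Hom.cell, f.comm], rfl⟩
  · exact Or.inr ⟨n, k, f.map _ c, rfl, by simp [Hom.cell, f.comm]⟩

lemma map_isCubePath (f : Hom X Y) {l : List X.Cell} (h : X.IsCubePath l) :
    Y.IsCubePath (l.map f.cell) := by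
  refine ⟨by simpa using h.1, ?_⟩
  refine (List.isChain_map f.cell).mpr ?_
  exact (show List.IsChain _ _ from h.2).imp fun a b hab => map_step f hab

lemma map_adj1 (f : Hom X Y) {a b b' c : X.Cell} (h : X.Adj1 a b b' c) :
    Y.Adj1 (f.cell a) (f.cell b) (f.cell b') (f.cell c) := by
  obtain ⟨n, k, l, hk, hl, hkl, u, rfl, rfl, rfl, ha, ha'⟩ := h
  subst ha
  simp only [Sigma.mk.inj_iff, heq_eq_eq, true_and] at ha'
  exact ⟨n, k, l, hk, hl, hkl, f.map _ u, rfl, by simp [Hom.cell, f.comm],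
    by simp [Hom.cell, f.comm], by simp [Hom.cell, f.comm],
    by simp [Hom.cell, f.comm, ha']⟩

lemma map_adj2 (f : Hom X Y) {a b b' c : X.Cell} (h : X.Adj2 a b b' c) :
    Y.Adj2 (f.cell a) (f.cell b) (f.cell b') (f.cell c) := by
  obtain ⟨n, k, l, hk, hl, hkl, u, rfl, rfl, rfl, hc, hc'⟩ := h
  subst hc
  simp only [Sigma.mk.inj_iff, heq_eq_eq, true_and] at hc'
  exact ⟨n, k, l, hk, hl, hkl, f.map _ u, rfl, by simp [Hom.cell, f.comm],
    by simp [Hom.cell, f.comm], by simp [Hom.cell, f.comm],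
    by simp [Hom.cell, f.comm, hc']⟩

lemma map_adj3 (f : Hom X Y) {a b b' c : X.Cell} (h : X.Adj3 a b b' c) :
    Y.Adj3 (f.cell a) (f.cell b) (f.cell b') (f.cell c) := by
  obtain ⟨n, k, l, hk, hl, hkl, u, rfl, rfl, rfl, rfl⟩ := h
  exact ⟨n, k, l, hk, hl, hkl, f.map _ u, rfl, by simp [Hom.cell, f.comm],
    by simp [Hom.cell, f.comm], by simp [Hom.cell, f.comm]⟩

lemma map_adj4 (f : Hom X Y) {a b b' c : X.Cell} (h : X.Adj4 a b b' c) :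
    Y.Adj4 (f.cell a) (f.cell b) (f.cell b') (f.cell c) := by
  obtain ⟨n, k, l, hk, hl, hkl, u, rfl, rfl, rfl, rfl⟩ := h
  exact ⟨n, k, l, hk, hl, hkl, f.map _ u, rfl, by simp [Hom.cell, f.comm],
    by simp [Hom.cell, f.comm], by simp [Hom.cell, f.comm]⟩

lemma map_adjMid (f : Hom X Y) {a b b' c : X.Cell} (h : X.AdjMid a b b' c) :
    Y.AdjMid (f.cell a) (f.cell b) (f.cell b') (f.cell c) := by
  rcases h with h | h | h | h | h | h | h | h
  · exact Or.inl (map_adj1 f h)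
  · exact Or.inr (Or.inl (map_adj2 f h))
  · exact Or.inr (Or.inr (Or.inl (map_adj3 f h)))
  · exact Or.inr (Or.inr (Or.inr (Or.inl (map_adj4 f h))))
  · exact Or.inr (Or.inr (Or.inr (Or.inr (Or.inl (map_adj1 f h)))))
  · exact Or.inr (Or.inr (Or.inr (Or.inr (Or.inr (Or.inl (map_adj2 f h))))))
  · exact Or.inr (Or.inr (Or.inr (Or.inr (Or.inr (Or.inr (Or.inl (map_adj3 f h)))))))
  · exact Or.inr (Or.inr (Or.inr (Or.inr (Or.inr (Or.inr (Or.inr (map_adj4 f h)))))))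

lemma map_adjacent (f : Hom X Y) {l₁ l₂ : List X.Cell} (h : X.Adjacent l₁ l₂) :
    l₁.map f.cell = l₂.map f.cell ∨ Y.Adjacent (l₁.map f.cell) (l₂.map f.cell) := by
  obtain ⟨h1, h2, hlen, p, hp0, hp1, hq, hne, a, b, b', c, ha, hb, hb', hc, hmid⟩ := h
  by_cases hbb : f.cell b = f.cell b'
  · left
    apply List.ext_getElem?
    intro q
    rw [List.getElem?_map, List.getElem?_map]
    rcases eq_or_ne q p with rfl | hqp
    · rw [hb, hb']
      simp [hbb]
    · rw [hq q hqp]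
  · right
    refine ⟨map_isCubePath f h1, map_isCubePath f h2, by simp [hlen], p, hp0,
      by simpa using hp1, ?_, ?_, f.cell a, f.cell b, f.cell b', f.cell c, ?_, ?_, ?_, ?_,
      map_adjMid f hmid⟩
    · intro q hqp
      rw [List.getElem?_map, List.getElem?_map, hq q hqp]
    · rw [List.getElem?_map, List.getElem?_map, hb, hb']
      simpa using hbb
    · rw [List.getElem?_map, ha]; rfl
    · rw [List.getElem?_map, hb]; rfl
    · rw [List.getElem?_map, hb']; rfl
    · rw [List.getElem?_map, hc]; rfl

lemma map_homotopic (f : Hom X Y) {l₁ l₂ : List X.Cell} (h : X.Homotopic l₁ l₂) :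
    Y.Homotopic (l₁.map f.cell) (l₂.map f.cell) := by
  induction h with
  | refl => exact Relation.ReflTransGen.refl
  | tail _ hadj ih =>
    rcases map_adjacent f hadj with he | hadj'
    · rwa [← he]
    · exact ih.tail hadj'

lemma adjMid_symm {a b b' c : X.Cell} (h : X.AdjMid a b b' c) : X.AdjMid a b' b c := by
  unfold AdjMid at *
  tauto

lemma adjacent_symm {l₁ l₂ : List X.Cell} (h : X.Adjacent l₁ l₂) : X.Adjacent l₂ l₁ := by
  obtain ⟨h1, h2, hlen, p, hp0, hp1, hq, hne, a, b, b', c, ha, hb, hb', hc, hmid⟩ := h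
  refine ⟨h2, h1, hlen.symm, p, hp0, by omega, fun q hqp => (hq q hqp).symm, fun he => hne he.symm,
    a, b', b, c, ?_, hb', hb, ?_, adjMid_symm hmid⟩
  · rw [← hq (p - 1) (by omega)]; exact ha
  · rw [← hq (p + 1) (by omega)]; exact hc

lemma homotopic_symm {l₁ l₂ : List X.Cell} (h : X.Homotopic l₁ l₂) : X.Homotopic l₂ l₁ :=
  @Std.Symm.symm _ _ (@Relation.ReflTransGen.stdSymm _ _ ⟨fun _ _ hab => adjacent_symm hab⟩) _ _ h

end PCSet

section HDAAux

variable {T Y : HDA}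

lemma map_pointedPath (f : HDAHom T Y) {l : List T.toPCSet.Cell} (h : T.IsPointedPath l) :
    Y.IsPointedPath (l.map f.toHom.cell) := by
  refine ⟨PCSet.map_isCubePath f.toHom h.1, ?_⟩
  rw [List.head?_map, h.2]
  simp [PCSet.Hom.cell, f.pointed]

/-- The image of a pointed cube path under a pointed morphism, as a `PPath`. -/
def mapPPath (f : HDAHom T Y) {n : ℕ} (l : List T.toPCSet.Cell)
    (hl : T.IsPointedPath l) (x : T.cube n) (hx : l.getLast? = some ⟨n, x⟩) :
    Y.PPath n :=
  ⟨l.map f.toHom.cell, map_pointedPath f hl,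
    f.toHom.map n x, by rw [List.getLast?_map, hx]; rfl⟩

lemma mapPPath_val (f : HDAHom T Y) {n : ℕ} (l : List T.toPCSet.Cell)
    (hl : T.IsPointedPath l) (x : T.cube n) (hx : l.getLast? = some ⟨n, x⟩) :
    (mapPPath f l hl x hx).1 = l.map f.toHom.cell := rfl

lemma pointedPath_concat {l : List T.toPCSet.Cell} (h : T.IsPointedPath l)
    {y z : T.toPCSet.Cell} (hy : l.getLast? = some y) (hs : T.toPCSet.Step y z) :
    T.IsPointedPath (l ++ [z]) := by
  refine ⟨⟨by simp, ?_⟩, ?_⟩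
  · apply List.isChain_append.mpr
    refine ⟨h.1.2, List.isChain_singleton z, ?_⟩
    intro a ha b hb
    rw [hy] at ha
    simp only [Option.mem_def, Option.some.injEq] at ha
    simp only [List.head?_cons, Option.mem_def, Option.some.injEq] at hb
    subst ha; subst hb
    exact hs
  · rw [List.head?_append, h.2]
    rfl

lemma cls_congr {Y : HDA} (UY : Unfolding Y) {n : ℕ} (a b : Y.PPath n) (h : a.1 = b.1) :
    UY.cls n a = UY.cls n b := by
  congr 1
  exact Subtype.ext h

/-- The chosen pointed cube path to a cell of a tree. -/
noncomputable def cpath (hT : T.IsTree) (x : T.toPCSet.Cell) : List T.toPCSet.Cell :=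
  ((hT x).1).choose

lemma cpath_spec (hT : T.IsTree) (x : T.toPCSet.Cell) :
    T.IsPointedPath (cpath hT x) ∧ (cpath hT x).getLast? = some x :=
  ((hT x).1).choose_spec

/-- The underlying map of the factorization `g : T → Ỹ`. -/
noncomputable def gmap (hT : T.IsTree) (UY : Unfolding Y) (f : HDAHom T Y)
    (n : ℕ) (x : T.cube n) : UY.Xu.cube n :=
  UY.cls n (mapPPath f (cpath hT ⟨n, x⟩) (cpath_spec hT ⟨n, x⟩).1 x (cpath_spec hT ⟨n, x⟩).2)

lemma gmap_eq (hT : T.IsTree) (UY : Unfolding Y) (f : HDAHom T Y) {n : ℕ} (x : T.cube n)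
    {l : List T.toPCSet.Cell} (hl : T.IsPointedPath l) (hx : l.getLast? = some ⟨n, x⟩)
    (b : Y.PPath n) (hb : b.1 = l.map f.toHom.cell) :
    gmap hT UY f n x = UY.cls n b := by
  rw [gmap, UY.cls_eq]
  rw [mapPPath_val, hb]
  exact PCSet.map_homotopic f.toHom
    ((hT ⟨n, x⟩).2 _ _ (cpath_spec hT ⟨n, x⟩).1 (cpath_spec hT ⟨n, x⟩).2 hl hx)

end HDAAux

end AuxLemmas
section MainConstruction

variable {T Y : HDA}

lemma gmap_comm (hT : T.IsTree) (UY : Unfolding Y) (f : HDAHom T Y)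
    (n : ℕ) (ν : Bool) (k : Fin (n + 1)) (x : T.cube (n + 1)) :
    gmap hT UY f n (T.toPCSet.face ν k x) = UY.Xu.toPCSet.face ν k (gmap hT UY f (n + 1) x) := by
  set l := cpath hT ⟨n + 1, x⟩ with hl_def
  have hl : T.IsPointedPath l := (cpath_spec hT ⟨n + 1, x⟩).1
  have hlx : l.getLast? = some ⟨n + 1, x⟩ := (cpath_spec hT ⟨n + 1, x⟩).2
  have ha : gmap hT UY f (n + 1) x = UY.cls (n + 1) (mapPPath f l hl x hlx) :=
    gmap_eq hT UY f x hl hlx _ rfl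
  have haend : (mapPPath f l hl x hlx).1.getLast? = some ⟨n + 1, f.toHom.map (n + 1) x⟩ := by
    rw [mapPPath_val, List.getLast?_map, hlx]; rfl
  cases ν with
  | true =>
    -- upper face: extend the path
    have hstep : T.toPCSet.Step ⟨n + 1, x⟩ ⟨n, T.toPCSet.face true k x⟩ :=
      Or.inr ⟨n, k, x, rfl, rfl⟩
    have hl' : T.IsPointedPath (l ++ [⟨n, T.toPCSet.face true k x⟩]) :=
      pointedPath_concat hl hlx hstep
    have hl'x : (l ++ [(⟨n, T.toPCSet.face true k x⟩ : T.toPCSet.Cell)]).getLast? =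
        some ⟨n, T.toPCSet.face true k x⟩ := List.getLast?_concat
    have hb : (mapPPath f _ hl' _ hl'x).1 =
        (mapPPath f l hl x hlx).1 ++
          [(⟨n, Y.toPCSet.face true k (f.toHom.map (n + 1) x)⟩ : Y.toPCSet.Cell)] := by
      rw [mapPPath_val, mapPPath_val, List.map_append]
      simp [PCSet.Hom.cell, f.toHom.comm]
    have := UY.face_true n k (mapPPath f l hl x hlx) (f.toHom.map (n + 1) x) haend
      (mapPPath f _ hl' _ hl'x) hb
    rw [ha, this]
    exact gmap_eq hT UY f _ hl' hl'x _ rfl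
  | false =>
    -- lower face
    set m := cpath hT ⟨n, T.toPCSet.face false k x⟩ with hm_def
    have hm : T.IsPointedPath m := (cpath_spec hT ⟨n, T.toPCSet.face false k x⟩).1
    have hmx : m.getLast? = some ⟨n, T.toPCSet.face false k x⟩ :=
      (cpath_spec hT ⟨n, T.toPCSet.face false k x⟩).2
    have hstep : T.toPCSet.Step ⟨n, T.toPCSet.face false k x⟩ ⟨n + 1, x⟩ :=
      Or.inl ⟨n, k, x, rfl, rfl⟩
    have hm' : T.IsPointedPath (m ++ [⟨n + 1, x⟩]) := pointedPath_concat hm hmx hstep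
    have hm'x : (m ++ [(⟨n + 1, x⟩ : T.toPCSet.Cell)]).getLast? = some ⟨n + 1, x⟩ :=
      List.getLast?_concat
    have hhom : T.toPCSet.Homotopic (m ++ [⟨n + 1, x⟩]) l :=
      (hT ⟨n + 1, x⟩).2 _ _ hm' hm'x hl hlx
    have key := (UY.face_false n k (mapPPath f l hl x hlx) (f.toHom.map (n + 1) x) haend
      (mapPPath f m hm _ hmx)).mpr ?_
    · rw [ha, key]
      exact (gmap_eq hT UY f _ hm hmx _ rfl).symm
    constructor
    · rw [mapPPath_val, List.getLast?_map, hmx]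
      simp [PCSet.Hom.cell, f.toHom.comm]
    · rw [mapPPath_val, mapPPath_val]
      have : (m.map f.toHom.cell) ++
          [(⟨n + 1, f.toHom.map (n + 1) x⟩ : Y.toPCSet.Cell)] =
          (m ++ [(⟨n + 1, x⟩ : T.toPCSet.Cell)]).map f.toHom.cell := by
        rw [List.map_append]; rfl
      rw [this]
      exact PCSet.map_homotopic f.toHom hhom

lemma gmap_pointed (hT : T.IsTree) (UY : Unfolding Y) (f : HDAHom T Y) :
    gmap hT UY f 0 T.base = UY.Xu.base := by
  have hl : T.IsPointedPath [⟨0, T.base⟩] := ⟨⟨by simp, List.isChain_singleton _⟩, rfl⟩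
  have hlx : ([(⟨0, T.base⟩ : T.toPCSet.Cell)]).getLast? = some ⟨0, T.base⟩ := rfl
  have hb : (mapPPath f _ hl _ hlx).1 = [(⟨0, Y.base⟩ : Y.toPCSet.Cell)] := by
    rw [mapPPath_val]
    simp [PCSet.Hom.cell, f.pointed]
  rw [gmap_eq hT UY f T.base hl hlx (mapPPath f _ hl _ hlx) rfl]
  exact UY.cls_base _ hb

/-- The factorization morphism `g : T → Ỹ`. -/
noncomputable def gHom (hT : T.IsTree) (UY : Unfolding Y) (f : HDAHom T Y) :
    HDAHom T UY.Xu where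
  toHom := { map := gmap hT UY f, comm := fun n ν k x => gmap_comm hT UY f n ν k x }
  pointed := gmap_pointed hT UY f

lemma HDAHom.ext' {X Z : HDA} {f g : HDAHom X Z}
    (h : ∀ n x, f.toHom.map n x = g.toHom.map n x) : f = g := by
  obtain ⟨⟨fm, fc⟩, fp⟩ := f
  obtain ⟨⟨gm, gc⟩, gp⟩ := g
  have : fm = gm := funext fun n => funext (h n)
  subst this
  rfl

lemma proj_gHom (hT : T.IsTree) (UY : Unfolding Y) (f : HDAHom T Y) :
    f = UY.proj.comp (gHom hT UY f) := by
  apply HDAHom.ext'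
  intro n x
  show f.toHom.map n x = UY.proj.toHom.map n (gmap hT UY f n x)
  rw [gmap]
  exact (UY.proj_cls n _ (f.toHom.map n x)
    (by rw [mapPPath_val, List.getLast?_map, (cpath_spec hT ⟨n, x⟩).2]; rfl)).symm

end MainConstruction
section Uniqueness

variable {T Y : HDA}

lemma key_unique (hT : T.IsTree) (UY : Unfolding Y) (f : HDAHom T Y) (h : HDAHom T UY.Xu)
    (hc : ∀ (n : ℕ) (x : T.cube n),
      UY.proj.toHom.map n (h.toHom.map n x) = f.toHom.map n x) :
    ∀ l : List T.toPCSet.Cell, T.IsPointedPath l →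
      ∀ (n : ℕ) (x : T.cube n), l.getLast? = some ⟨n, x⟩ →
        ∀ b : Y.PPath n, b.1 = l.map f.toHom.cell → h.toHom.map n x = UY.cls n b := by
  intro l
  induction l using List.reverseRecOn with
  | nil => intro hl; exact absurd rfl hl.1.1
  | append_singleton l' z ih =>
    intro hl n x hx b hb
    have hz : z = ⟨n, x⟩ := by
      rw [List.getLast?_concat] at hx
      exact Option.some.inj hx
    subst hz
    rcases eq_or_ne l' [] with rfl | hne
    · -- base case: l = [⟨n,x⟩] with ⟨n,x⟩ = ⟨0, base⟩
      have hbase : (⟨n, x⟩ : T.toPCSet.Cell) = ⟨0, T.base⟩ := by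
        have := hl.2
        simpa using this
      obtain ⟨h0, hxb⟩ := Sigma.mk.inj_iff.mp hbase
      subst h0
      rw [heq_eq_eq] at hxb
      subst hxb
      rw [h.pointed]
      refine (UY.cls_base b ?_).symm
      rw [hb]
      simp [PCSet.Hom.cell, f.pointed]
    · -- inductive step
      obtain ⟨y, hy⟩ : ∃ y, l'.getLast? = some y := by
        rcases l' with _ | ⟨a, l''⟩
        · exact absurd rfl hne
        · exact ⟨_, List.getLast?_eq_getLast (by simp)⟩
      have hl' : T.IsPointedPath l' := by
        refine ⟨⟨hne, (List.isChain_append.mp hl.1.2).1⟩, ?_⟩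
        have h2 := hl.2
        rw [List.head?_append] at h2
        rcases l' with _ | ⟨a, l''⟩
        · exact absurd rfl hne
        · exact h2
      have hstep : T.toPCSet.Step y ⟨n, x⟩ := by
        have := (List.isChain_append.mp hl.1.2).2.2
        exact this y hy _ rfl
      rcases hstep with ⟨m, j, c, hy1, hy2⟩ | ⟨m, j, c, hy1, hy2⟩
      · -- y = δ_j^0 c, ⟨n,x⟩ = ⟨m+1, c⟩ : lower-face step
        obtain ⟨hnm, hxc⟩ := Sigma.mk.inj_iff.mp hy2
        subst hnm
        rw [heq_eq_eq] at hxc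
        subst hxc
        subst hy1
        -- IH: h(δ_j^0 x) = cls (image of l')
        have hIH := ih hl' m (T.toPCSet.face false j x) hy
          (mapPPath f l' hl' _ hy) rfl
        -- surjectivity: the class of h(x)
        obtain ⟨a₀, ha₀⟩ := UY.cls_surj (m + 1) (h.toHom.map (m + 1) x)
        obtain ⟨c', hc'⟩ := a₀.2.2
        have hc'fx : c' = f.toHom.map (m + 1) x := by
          have := UY.proj_cls (m + 1) a₀ c' hc'
          rw [ha₀, hc (m + 1) x] at this
          exact this.symm
        subst hc'fx
        have hface := UY.face_false m j a₀ (f.toHom.map (m + 1) x) hc'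
          (mapPPath f l' hl' _ hy)
        have hlhs : UY.Xu.toPCSet.face false j (UY.cls (m + 1) a₀) =
            UY.cls m (mapPPath f l' hl' _ hy) := by
          rw [ha₀, ← h.toHom.comm]
          exact hIH
        have hhom := (hface.mp hlhs).2
        -- conclude
        rw [← ha₀, UY.cls_eq]
        refine (PCSet.homotopic_symm ?_)
        rw [hb, List.map_append, mapPPath_val] at *
        exact hhom
      · -- y = ⟨m+1, c⟩, ⟨n,x⟩ = δ_j^1 y : upper-face step
        obtain ⟨hnm, hxc⟩ := Sigma.mk.inj_iff.mp hy2
        subst hnm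
        rw [heq_eq_eq] at hxc
        subst hxc
        subst hy1
        have hIH := ih hl' (n + 1) c hy (mapPPath f l' hl' _ hy) rfl
        have haend : (mapPPath f l' hl' c hy).1.getLast? =
            some ⟨n + 1, f.toHom.map (n + 1) c⟩ := by
          rw [mapPPath_val, List.getLast?_map, hy]; rfl
        have hbval : b.1 = (mapPPath f l' hl' c hy).1 ++
            [(⟨n, Y.toPCSet.face true j (f.toHom.map (n + 1) c)⟩ : Y.toPCSet.Cell)] := by
          rw [hb, List.map_append, mapPPath_val]
          simp [PCSet.Hom.cell, f.toHom.comm]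
        have := UY.face_true n j (mapPPath f l' hl' c hy) (f.toHom.map (n + 1) c) haend b hbval
        rw [← this, ← hIH, ← h.toHom.comm]

end Uniqueness
/-- Proposition 5.3: every pointed precubical morphism `f : T → Y` from a
higher-dimensional tree factors uniquely through the projection
`π_Y : Ỹ → Y`; consequently (the hom-set bijection of the adjunction)
unfolding is right adjoint to the inclusion HDT ↪ HDA, with counit the
projections. -/
theorem tree_factors_through_unfolding :
    (∀ (T Y : HDA), T.IsTree → ∀ (UY : Unfolding Y) (f : HDAHom T Y),
      ∃! g : HDAHom T UY.Xu, f = UY.proj.comp g) ∧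
    (∀ (T Y : HDA), T.IsTree → ∀ UY : Unfolding Y,
      Function.Bijective (fun g : HDAHom T UY.Xu => UY.proj.comp g)) := by
  have part1 : ∀ (T Y : HDA), T.IsTree → ∀ (UY : Unfolding Y) (f : HDAHom T Y),
      ∃! g : HDAHom T UY.Xu, f = UY.proj.comp g := by
    intro T Y hT UY f
    refine ⟨gHom hT UY f, proj_gHom hT UY f, ?_⟩
    intro g' hg'
    have hc : ∀ (n : ℕ) (x : T.cube n),
        UY.proj.toHom.map n (g'.toHom.map n x) = f.toHom.map n x := by
      intro n x
      rw [hg']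
      rfl
    apply HDAHom.ext'
    intro n x
    have h1 := key_unique hT UY f g' hc (cpath hT ⟨n, x⟩) (cpath_spec hT ⟨n, x⟩).1 n x
      (cpath_spec hT ⟨n, x⟩).2
      (mapPPath f (cpath hT ⟨n, x⟩) (cpath_spec hT ⟨n, x⟩).1 x (cpath_spec hT ⟨n, x⟩).2) rfl
    rw [h1]
    rfl
  refine ⟨part1, ?_⟩
  intro T Y hT UY
  constructor
  · intro g₁ g₂ hgg
    obtain ⟨g, _, hun⟩ := part1 T Y hT UY (UY.proj.comp g₁)
    rw [hun g₁ rfl, hun g₂ hgg]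
  · intro f
    obtain ⟨g, hg, _⟩ := part1 T Y hT UY f
    exact ⟨g, hg.symm⟩
end

section
/- Let X be an HDA and x̃, z̃ ∈ X̃ cubes in its unfolding. Then there is a cube path from x̃ to z̃ in X̃ if and only if x̃ ⊑ z̃, i.e. x̃ is a prefix of z̃ as homotopy classes of pointed cube paths. -/
set_option autoImplicit false

open PCSet

section AuxLemmas

variable {X : HDA} (U : Unfolding X)

lemma cls_congr_s15 {k : ℕ} (a b : X.PPath k) (h : a.1 = b.1) : U.cls k a = U.cls k b := by
  cases a; cases b; cases h; rfl

lemma isPointedPath_append_step {l : List X.toPCSet.Cell} {y z : X.toPCSet.Cell}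
    (hl : X.IsPointedPath l) (hlast : l.getLast? = some y)
    (hstep : X.toPCSet.Step y z) : X.IsPointedPath (l ++ [z]) := by
  obtain ⟨⟨hne, hch⟩, hh⟩ := hl
  refine ⟨⟨by simp, List.isChain_append.mpr ⟨hch, List.isChain_singleton z, ?_⟩⟩, ?_⟩
  · intro x hx y' hy'
    rw [hlast] at hx
    simp only [List.head?_cons] at hy'
    cases hx; cases hy'
    exact hstep
  · rw [List.head?_append_of_ne_nil _ hne]; exact hh

lemma classLe_refl (c : U.Xu.toPCSet.Cell) : U.ClassLe c c := by
  obtain ⟨a, ha⟩ := U.cls_surj c.1 c.2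
  exact ⟨a, a, ha, ha, List.prefix_refl _⟩

lemma classLe_step {c d e : U.Xu.toPCSet.Cell}
    (h : U.ClassLe c d) (hs : U.Xu.toPCSet.Step d e) : U.ClassLe c e := by
  obtain ⟨a, b, ha, hb, hpre⟩ := h
  rcases hs with ⟨p, k, u, hd, he⟩ | ⟨p, k, u, hd, he⟩
  · subst hd; subst he
    obtain ⟨g, hg⟩ := U.cls_surj (p + 1) u
    obtain ⟨c', hlast⟩ := g.2.2
    have hLHS : U.Xu.toPCSet.face false k (U.cls (p + 1) g) = U.cls p b := by
      rw [hg]; exact hb.symm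
    obtain ⟨hb_last, hhom⟩ := (U.face_false p k g c' hlast b).mp hLHS
    have hstepX : X.toPCSet.Step (⟨p, X.toPCSet.face false k c'⟩ : X.toPCSet.Cell)
        ⟨p + 1, c'⟩ := Or.inl ⟨p, k, c', rfl, rfl⟩
    have hpp : X.IsPointedPath (b.1 ++ [(⟨p + 1, c'⟩ : X.toPCSet.Cell)]) :=
      isPointedPath_append_step b.2.1 hb_last hstepX
    refine ⟨a, ⟨b.1 ++ [⟨p + 1, c'⟩], hpp, c', List.getLast?_concat⟩, ha, ?_,
      hpre.trans (List.prefix_append _ _)⟩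
    show U.cls (p + 1) _ = u
    exact ((U.cls_eq (p + 1) ⟨b.1 ++ [⟨p + 1, c'⟩], hpp, c', List.getLast?_concat⟩ g).mpr hhom).trans hg
  · subst hd; subst he
    obtain ⟨c', hlast⟩ := b.2.2
    have hstepX : X.toPCSet.Step (⟨p + 1, c'⟩ : X.toPCSet.Cell)
        ⟨p, X.toPCSet.face true k c'⟩ := Or.inr ⟨p, k, c', rfl, rfl⟩
    have hpp : X.IsPointedPath (b.1 ++ [(⟨p, X.toPCSet.face true k c'⟩ : X.toPCSet.Cell)]) :=
      isPointedPath_append_step b.2.1 hlast hstepX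
    have hft := U.face_true p k b c' hlast
      ⟨b.1 ++ [⟨p, X.toPCSet.face true k c'⟩], hpp, X.toPCSet.face true k c',
        List.getLast?_concat⟩ rfl
    refine ⟨a, ⟨b.1 ++ [⟨p, X.toPCSet.face true k c'⟩], hpp, X.toPCSet.face true k c',
      List.getLast?_concat⟩, ha, ?_, hpre.trans (List.prefix_append _ _)⟩
    show U.cls p _ = U.Xu.toPCSet.face true k u
    rw [← hft, hb]

lemma chain_classLe :
    ∀ l : List U.Xu.toPCSet.Cell, l.Chain' U.Xu.toPCSet.Step →
      ∀ c e : U.Xu.toPCSet.Cell, l.head? = some c → l.getLast? = some e →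
        U.ClassLe c e := by
  intro l
  induction l using List.reverseRecOn with
  | nil => intro _ c e h _; simp at h
  | append_singleton L y IH =>
    intro hch c e hh hl
    rw [List.getLast?_concat] at hl
    obtain rfl : y = e := by injection hl
    rcases List.eq_nil_or_concat' L with rfl | ⟨L', z, rfl⟩
    · simp only [List.nil_append, List.head?_cons] at hh
      cases hh
      exact classLe_refl U y
    · have hne : L' ++ [z] ≠ [] := by simp
      rw [List.head?_append_of_ne_nil _ hne] at hh
      have hpre := (List.isChain_append.mp hch)
      have hstep : U.Xu.toPCSet.Step z y := by
        have := hpre.2.2 z (List.getLast?_concat) y rfl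
        exact this
      exact classLe_step U (IH hpre.1 c z hh (List.getLast?_concat)) hstep

lemma path_of_prefix {n : ℕ} (a : X.PPath n) :
    ∀ L : List X.toPCSet.Cell, X.IsPointedPath L → a.1 <+: L →
      ∀ (m : ℕ) (b : X.PPath m), b.1 = L →
      ∃ l : List U.Xu.toPCSet.Cell, U.Xu.toPCSet.IsCubePath l ∧
        l.head? = some ⟨n, U.cls n a⟩ ∧ l.getLast? = some ⟨m, U.cls m b⟩ := by
  intro L
  induction L using List.reverseRecOn with
  | nil => intro hp; exact absurd rfl hp.1.1
  | append_singleton L' y IH =>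
    intro hp hpre m b hb
    -- identify y with the last cube of b
    obtain ⟨cb, hcb⟩ := b.2.2
    rw [hb, List.getLast?_concat] at hcb
    obtain rfl : y = ⟨m, cb⟩ := by injection hcb
    rcases List.prefix_concat_iff.mp hpre with heq | hpre'
    · -- a.1 = whole path: single-cell cube path
      obtain ⟨ca, hca⟩ := a.2.2
      have hca' : a.1.getLast? = some ⟨m, cb⟩ := by
        rw [heq, List.getLast?_concat]
      rw [hca] at hca'
      have hca'' := Option.some.inj hca'
      injection hca'' with h1 h2
      subst h1
      have hab : a = b := Subtype.ext (heq.trans hb.symm)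
      subst hab
      exact ⟨[⟨n, U.cls n a⟩], ⟨by simp, List.isChain_singleton _⟩, rfl, rfl⟩
    · -- a.1 is a proper prefix, contained in L'
      have hane : a.1 ≠ [] := a.2.1.1.1
      have hL'ne : L' ≠ [] := by
        rintro rfl
        exact hane (List.prefix_nil.mp hpre')
      have hpL' : X.IsPointedPath L' := by
        have hh' := hp.2
        rw [List.head?_append_of_ne_nil L' hL'ne] at hh'
        exact ⟨⟨hL'ne, hp.1.2.prefix (List.prefix_append _ _)⟩, hh'⟩
      obtain ⟨w, hw⟩ := Option.isSome_iff_exists.mp (List.getLast?_isSome.mpr hL'ne)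
      obtain ⟨w1, w2⟩ := w
      obtain ⟨l, hlcp, hlh, hll⟩ := IH hpL' hpre' w1 ⟨L', hpL', w2, hw⟩ rfl
      have hstep : X.toPCSet.Step ⟨w1, w2⟩ ⟨m, cb⟩ :=
        (List.isChain_append.mp hp.1.2).2.2 ⟨w1, w2⟩ hw _ rfl
      have hbL : b.1.getLast? = some ⟨m, cb⟩ := by rw [hb]; exact List.getLast?_concat
      have hustep : U.Xu.toPCSet.Step
          (⟨w1, U.cls w1 ⟨L', hpL', w2, hw⟩⟩ : U.Xu.toPCSet.Cell) ⟨m, U.cls m b⟩ := by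
        rcases hstep with ⟨p, k, u, hw1, hy1⟩ | ⟨p, k, u, hw1, hy1⟩
        · -- lower face step: w = δ_k^0 u, next cell u of dim p+1
          injection hy1 with h1 h2
          subst h1
          obtain rfl : cb = u := eq_of_heq h2
          injection hw1 with h3 h4
          subst h3
          obtain rfl : w2 = X.toPCSet.face false k cb := eq_of_heq h4
          have hff : U.Xu.toPCSet.face false k (U.cls (w1 + 1) b) =
              U.cls w1 ⟨L', hpL', _, hw⟩ :=
            (U.face_false w1 k b cb hbL _).mpr
              ⟨hw, by
                rw [show L' ++ [(⟨w1 + 1, cb⟩ : X.toPCSet.Cell)] = b.1 from hb.symm]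
                exact Relation.ReflTransGen.refl⟩
          exact Or.inl ⟨w1, k, U.cls (w1 + 1) b, by rw [hff], rfl⟩
        · -- upper face step
          injection hy1 with h1 h2
          subst h1
          obtain rfl : cb = X.toPCSet.face true k u := eq_of_heq h2
          injection hw1 with h3 h4
          subst h3
          obtain rfl : w2 = u := eq_of_heq h4
          have hft := U.face_true m k ⟨L', hpL', w2, hw⟩ w2 hw b hb
          exact Or.inr ⟨m, k, U.cls (m + 1) ⟨L', hpL', w2, hw⟩, rfl, by rw [hft]⟩
      refine ⟨l ++ [⟨m, U.cls m b⟩], ⟨by simp, ?_⟩, ?_, List.getLast?_concat⟩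
      · refine List.isChain_append.mpr ⟨hlcp.2, List.isChain_singleton _, ?_⟩
        intro x hx y' hy'
        rw [hll] at hx
        simp only [List.head?_cons] at hy'
        cases hx; cases hy'
        exact hustep
      · rw [List.head?_append_of_ne_nil _ hlcp.1]; exact hlh

end AuxLemmas

/-- Lemma 6.4: for cubes `x̃, z̃` of the unfolding `X̃` there is a cube path
from `x̃` to `z̃` in `X̃` if and only if `x̃ ⊑ z̃` as homotopy classes of
pointed cube paths. -/
theorem reach_vs_prefix (X : HDA) (U : Unfolding X) (n m : ℕ)
    (x : U.Xu.cube n) (z : U.Xu.cube m) :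
    (∃ l : List U.Xu.toPCSet.Cell, U.Xu.toPCSet.IsCubePath l ∧
        l.head? = some ⟨n, x⟩ ∧ l.getLast? = some ⟨m, z⟩) ↔
      U.ClassLe ⟨n, x⟩ ⟨m, z⟩ := by
  constructor
  · rintro ⟨l, ⟨hne, hch⟩, hh, hl⟩
    exact chain_classLe U l hch _ _ hh hl
  · rintro ⟨a, b, ha, hb, hpre⟩
    obtain ⟨l, hcp, hh, hl⟩ := path_of_prefix U a b.1 b.2.1 hpre _ b rfl
    refine ⟨l, hcp, ?_, ?_⟩
    · rw [hh]
      exact congrArg some (congrArg _ ha)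
    · rw [hl]
      exact congrArg some (congrArg _ hb)
end
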